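/- The R-transform R(z) = t z/(1 − z²) corresponds, via the equations G(K(z)) = z, K(z) = R(z) + 1/z, to a moment generating series f(z) = Σ_k m_k z^k satisfying f = 1 + (zf)²(f + t − 1), whose even moments are m_{2k} = Σ_{b=1}^k (1/b) binom(k−1, b−1) binom(2k, b−1) t^b and whose odd moments vanish. -/

import Mathlib

open PowerSeries

/-- The moments of the free Bessel law, as polynomials in `t`:
`m_{2k} = Σ_{b=1}^k (1/b) binom(k−1,b−1) binom(2k,b−1) t^b`, `m_0 = 1`, odd moments `0`. -/
noncomputable def freeBesselMoment : ℕ → Polynomial ℚ := fun k =>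
  if k = 0 then 1
  else if 2 ∣ k then
    ∑ b ∈ Finset.Icc 1 (k / 2),
      Polynomial.C ((1 / (b : ℚ)) * ((k / 2 - 1).choose (b - 1)) * (k.choose (b - 1)))
        * Polynomial.X ^ b
  else 0

section FreeBesselAux
open Finset

abbrev KK := RatFunc ℚ

noncomputable instance : CharZero KK :=
  charZero_of_injective_algebraMap (algebraMap ℚ (RatFunc ℚ)).injective

noncomputable def mc (T : KK) : ℕ → KK
  | 0 => 1
  | 1 => 0
  | (n+2) =>
      (∑ p ∈ (Finset.HasAntidiagonal.antidiagonal n).attach,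
        (∑ q ∈ (Finset.HasAntidiagonal.antidiagonal p.1.1).attach,
           mc T q.1.1 * mc T q.1.2) * mc T p.1.2)
      + (T - 1) * ∑ p ∈ (Finset.HasAntidiagonal.antidiagonal n).attach, mc T p.1.1 * mc T p.1.2
  decreasing_by
  all_goals {
    have h1 := Finset.HasAntidiagonal.antidiagonal.fst_le p.2
    have h2 := Finset.HasAntidiagonal.antidiagonal.snd_le p.2
    first
    | omega
    | (have h3 := Finset.HasAntidiagonal.antidiagonal.fst_le q.2
       have h4 := Finset.HasAntidiagonal.antidiagonal.snd_le q.2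
       omega) }

variable (T : KK)

noncomputable def fz : KK⟦X⟧ := PowerSeries.mk (mc T)

lemma coeff_fz (n : ℕ) : coeff n (fz T) = mc T n := coeff_mk _ _

lemma coeff_fz_sq (n : ℕ) :
    coeff n (fz T * fz T) = ∑ q ∈ Finset.HasAntidiagonal.antidiagonal n, mc T q.1 * mc T q.2 := by
  rw [coeff_mul]; simp [coeff_fz]

lemma mc_succ_succ (n : ℕ) :
    mc T (n+2) = coeff n ((fz T * fz T) * fz T + (C T - 1) * (fz T * fz T)) := by
  have hC : (C T - 1 : KK⟦X⟧) = C (T - 1) := by simp [map_sub]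
  rw [map_add, coeff_mul, hC, coeff_C_mul, coeff_fz_sq]
  simp only [coeff_fz_sq, coeff_fz]
  rw [mc]
  congr 1
  · rw [← Finset.sum_attach (Finset.HasAntidiagonal.antidiagonal n)
      (fun p => (∑ q ∈ Finset.HasAntidiagonal.antidiagonal p.1, mc T q.1 * mc T q.2) * mc T p.2)]
    exact Finset.sum_congr rfl fun p _ => by
      rw [Finset.sum_attach (Finset.HasAntidiagonal.antidiagonal (p.1).1) (fun q => mc T q.1 * mc T q.2)]
  · rw [← Finset.sum_attach (Finset.HasAntidiagonal.antidiagonal n) (fun p => mc T p.1 * mc T p.2)]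

lemma fz_eq : fz T = 1 + X^2 * ((fz T * fz T) * fz T + (C T - 1) * (fz T * fz T)) := by
  ext n
  match n with
  | 0 => simp [coeff_fz, mc]
  | 1 =>
    rw [coeff_fz, mc]
    rw [map_add, coeff_mul]
    have : ∑ x ∈ Finset.HasAntidiagonal.antidiagonal 1, coeff x.1 (X^2) *
        coeff x.2 ((fz T * fz T) * fz T + (C T - 1) * (fz T * fz T)) = 0 := by
      refine Finset.sum_eq_zero fun x hx => ?_
      have := Finset.HasAntidiagonal.antidiagonal.fst_le hx
      rw [coeff_X_pow, if_neg (by omega), zero_mul]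
    rw [this]
    simp
  | (n+2) =>
    rw [coeff_fz, mc_succ_succ]
    have h2 : coeff (n+2) (X^2 * ((fz T * fz T) * fz T + (C T - 1) * (fz T * fz T)))
        = coeff n ((fz T * fz T) * fz T + (C T - 1) * (fz T * fz T)) := by
      have := coeff_X_pow_mul ((fz T * fz T) * fz T + (C T - 1) * (fz T * fz T)) 2 n
      simpa [add_comm] using this
    conv_rhs => rw [map_add, h2]
    simp [coeff_one]

lemma mc_odd : ∀ k, mc T (2*k+1) = 0 := by
  intro k
  induction k using Nat.strong_induction_on with
  | _ k ih =>
    match k, ih with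
    | 0, _ => rw [show 2*0+1 = 1 by rfl, mc]
    | (k+1), ih =>
      have key : ∀ m ≤ 2*k+1, m % 2 = 1 → mc T m = 0 := by
        intro m hm hodd
        obtain ⟨j, hj⟩ : ∃ j, m = 2*j+1 := ⟨m/2, by omega⟩
        subst hj
        exact ih j (by omega)
      show mc T (2*k+1+2) = 0
      rw [mc]
      have hA : (∑ p ∈ (Finset.HasAntidiagonal.antidiagonal (2*k+1)).attach,
          (∑ q ∈ (Finset.HasAntidiagonal.antidiagonal p.1.1).attach,
            mc T q.1.1 * mc T q.1.2) * mc T p.1.2) = 0 := by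
        refine Finset.sum_eq_zero fun p _ => ?_
        have hp := Finset.HasAntidiagonal.mem_antidiagonal.mp p.2
        rcases Nat.even_or_odd p.1.2 with he | ho
        · -- p.1.1 odd
          have h1 : p.1.1 % 2 = 1 := by
            rcases he with ⟨a, ha⟩; omega
          have : (∑ q ∈ (Finset.HasAntidiagonal.antidiagonal p.1.1).attach,
              mc T q.1.1 * mc T q.1.2) = 0 := by
            refine Finset.sum_eq_zero fun q _ => ?_
            have hq := Finset.HasAntidiagonal.mem_antidiagonal.mp q.2
            rcases Nat.even_or_odd q.1.1 with he' | ho'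
            · have : mc T q.1.2 = 0 := by
                refine key _ (by omega) ?_
                rcases he' with ⟨a, ha⟩; omega
              rw [this, mul_zero]
            · have : mc T q.1.1 = 0 := by
                refine key _ (by omega) ?_
                rcases ho' with ⟨a, ha⟩; omega
              rw [this, zero_mul]
          rw [this, zero_mul]
        · have : mc T p.1.2 = 0 := by
            refine key _ (by omega) ?_
            rcases ho with ⟨a, ha⟩; omega
          rw [this, mul_zero]
      have hB : (∑ p ∈ (Finset.HasAntidiagonal.antidiagonal (2*k+1)).attach,
          mc T p.1.1 * mc T p.1.2) = 0 := by
        refine Finset.sum_eq_zero fun p _ => ?_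
        have hp := Finset.HasAntidiagonal.mem_antidiagonal.mp p.2
        rcases Nat.even_or_odd p.1.1 with he | ho
        · have : mc T p.1.2 = 0 := by
            refine key _ (by omega) ?_
            rcases he with ⟨a, ha⟩; omega
          rw [this, mul_zero]
        · have : mc T p.1.1 = 0 := by
            refine key _ (by omega) ?_
            rcases ho with ⟨a, ha⟩; omega
          rw [this, zero_mul]
      rw [hA, hB, mul_zero, add_zero]

def IsEvenSeries (g : KK⟦X⟧) : Prop := ∀ j, (coeff (2*j+1)) g = 0

lemma isEvenSeries_coeff {g : KK⟦X⟧} (h : IsEvenSeries g) {m : ℕ} (hm : m % 2 = 1) :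
    coeff m g = 0 := by
  obtain ⟨j, rfl⟩ : ∃ j, m = 2*j+1 := ⟨m/2, by omega⟩
  exact h j

lemma fz_even : IsEvenSeries (fz T) := fun j => by rw [coeff_fz]; exact mc_odd T j

lemma IsEvenSeries.mul {g₁ g₂ : KK⟦X⟧} (h₁ : IsEvenSeries g₁) (h₂ : IsEvenSeries g₂) :
    IsEvenSeries (g₁ * g₂) := by
  intro n
  rw [coeff_mul]
  refine Finset.sum_eq_zero fun p hp => ?_
  have := Finset.HasAntidiagonal.mem_antidiagonal.mp hp
  rcases Nat.even_or_odd p.1 with he | ho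
  · rw [isEvenSeries_coeff h₂ (by rcases he with ⟨a,ha⟩; omega), mul_zero]
  · rw [isEvenSeries_coeff h₁ (by rcases ho with ⟨a,ha⟩; omega), zero_mul]

lemma even_mul_coeff {g₁ g₂ : KK⟦X⟧} (h₁ : IsEvenSeries g₁) (h₂ : IsEvenSeries g₂) (n : ℕ) :
    coeff (2*n) (g₁*g₂)
      = ∑ p ∈ Finset.HasAntidiagonal.antidiagonal n, coeff (2*p.1) g₁ * coeff (2*p.2) g₂ := by
  rw [coeff_mul]
  rw [← Finset.sum_filter_of_ne (p := fun p => p.1 % 2 = 0)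
    (by
      intro p hp hne
      by_contra h
      have := Finset.HasAntidiagonal.mem_antidiagonal.mp hp
      rcases Nat.even_or_odd p.1 with he | ho
      · exact h (by rcases he with ⟨a,ha⟩; omega)
      · exact hne (by rw [isEvenSeries_coeff h₁ (by rcases ho with ⟨a,ha⟩; omega), zero_mul]))]
  refine (Finset.sum_nbij' (i := fun p => (2*p.1, 2*p.2)) (j := fun p => (p.1/2, p.2/2))
    ?_ ?_ ?_ ?_ ?_).symm
  · intro p hp
    have := Finset.HasAntidiagonal.mem_antidiagonal.mp hp
    simp only [Finset.mem_filter, Finset.HasAntidiagonal.mem_antidiagonal]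
    omega
  · intro p hp
    simp only [Finset.mem_filter, Finset.HasAntidiagonal.mem_antidiagonal] at hp
    simp only [Finset.HasAntidiagonal.mem_antidiagonal]
    omega
  · intro p hp; simp
  · intro p hp
    simp only [Finset.mem_filter, Finset.HasAntidiagonal.mem_antidiagonal] at hp
    obtain ⟨h1, h2⟩ := hp
    have e1 : 2 * (p.1/2) = p.1 := by omega
    have e2 : 2 * (p.2/2) = p.2 := by omega
    simp [Prod.ext_iff, e1, e2]
  · intro p hp; rfl

noncomputable def FK : KK⟦X⟧ := PowerSeries.mk (fun k => mc T (2*k))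

lemma coeff_FK (n : ℕ) : coeff n (FK T) = mc T (2*n) := coeff_mk _ _

lemma coeff_FK_sq (n : ℕ) : coeff n (FK T * FK T) = coeff (2*n) (fz T * fz T) := by
  rw [coeff_mul, even_mul_coeff (fz_even T) (fz_even T)]
  simp [coeff_FK, coeff_fz]

lemma coeff_FK_cube (n : ℕ) :
    coeff n ((FK T * FK T) * FK T) = coeff (2*n) ((fz T * fz T) * fz T) := by
  rw [coeff_mul, even_mul_coeff ((fz_even T).mul (fz_even T)) (fz_even T)]
  refine Finset.sum_congr rfl fun p _ => ?_
  rw [coeff_FK_sq, coeff_FK, coeff_fz]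

lemma FK_eq : FK T = 1 + X * ((FK T * FK T) * FK T + (C T - 1) * (FK T * FK T)) := by
  ext n
  match n with
  | 0 => simp [coeff_FK, mc]
  | (n+1) =>
    have hC : (C T - 1 : KK⟦X⟧) = C (T - 1) := by simp [map_sub]
    have hR : coeff (n+1) (X * ((FK T * FK T) * FK T + (C T - 1) * (FK T * FK T)))
        = coeff n ((FK T * FK T) * FK T + (C T - 1) * (FK T * FK T)) := by
      simpa using coeff_X_pow_mul ((FK T * FK T) * FK T + (C T - 1) * (FK T * FK T)) 1 n
    conv_rhs => rw [map_add, hR]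
    rw [coeff_one, if_neg (by omega), zero_add, coeff_FK]
    rw [show 2*(n+1) = 2*n+2 by ring, mc_succ_succ]
    rw [map_add, map_add, coeff_FK_cube, hC, coeff_C_mul, coeff_C_mul, coeff_FK_sq]

section Lagrange

variable (W : KK⟦X⟧)

local notation "D" => PowerSeries.derivative KK

lemma DV_eq (hW : PowerSeries.constantCoeff W ≠ 0) : D (W⁻¹) = -(W⁻¹ ^ 2 * D W) := by
  have h0 : D (W * W⁻¹) = 0 := by rw [PowerSeries.mul_inv_cancel W hW]; exact Derivation.map_one_eq_zero _
  rw [Derivation.leibniz] at h0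
  have h1 : W⁻¹ * (W • D (W⁻¹) + W⁻¹ • D W) = 0 := by rw [h0, mul_zero]
  rw [smul_eq_mul, smul_eq_mul, mul_add, ← mul_assoc, PowerSeries.inv_mul_cancel W hW, one_mul] at h1
  linear_combination h1

/-- Sub-lemma B, case j ≥ 2. -/
lemma resid_zero (hW : PowerSeries.constantCoeff W ≠ 0) (m : ℕ) :
    coeff (m+1) (W⁻¹^(m+2) * (W + X * D W)) = 0 := by
  have hVW : W * W⁻¹ = 1 := PowerSeries.mul_inv_cancel W hW
  have e : W⁻¹^(m+2) * (W + X * D W)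
      = W⁻¹^(m+1) * (W * W⁻¹) + X * (W⁻¹^(m+2) * D W) := by ring
  rw [hVW, mul_one] at e
  rw [e, map_add, coeff_succ_X_mul]
  have h1 : D (W⁻¹ ^ (m+1)) = (m+1) • W⁻¹ ^ (m+1-1) • D (W⁻¹) :=
    Derivation.leibniz_pow _ _ _
  simp only [Nat.add_sub_cancel] at h1
  rw [DV_eq W hW, smul_eq_mul] at h1
  have h2 : D (W⁻¹^(m+1)) = -((m+1) • (W⁻¹^(m+2) * D W)) := by
    rw [h1, nsmul_eq_mul, nsmul_eq_mul]
    ring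
  have h3 : ((m:KK)+1) * coeff m (W⁻¹^(m+2) * D W)
      = -(coeff m (D (W⁻¹^(m+1)))) := by
    rw [h2, map_neg, neg_neg, map_nsmul, nsmul_eq_mul]
    push_cast
    ring
  have h4 : coeff m (D (W⁻¹^(m+1))) = coeff (m+1) (W⁻¹^(m+1)) * ((m+1 : ℕ) : KK) :=
    PowerSeries.coeff_derivative _ _
  have hne : ((m:KK)+1) ≠ 0 := by
    have : ((m+1 : ℕ) : KK) ≠ 0 := Nat.cast_ne_zero.mpr (by omega)
    push_cast at this; exact this
  have h5 : ((m:KK)+1) * (coeff (m+1) (W⁻¹^(m+1)) + coeff m (W⁻¹^(m+2) * D W)) = 0 := by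
    rw [mul_add, h3, h4]; push_cast; ring
  rcases mul_eq_zero.mp h5 with h | h
  · exact absurd h hne
  · exact h

/-- Sub-lemma B, case j = 1. -/
lemma resid_one (hW : PowerSeries.constantCoeff W ≠ 0) : coeff 0 (W⁻¹^1 * (W + X * D W)) = 0 + 1 := by
  have e : W⁻¹^1 * (W + X * D W) = W⁻¹ * W + X * (W⁻¹ * D W) := by ring
  rw [e, map_add, PowerSeries.inv_mul_cancel W hW]
  simp

lemma coeff_X_pow_mul_lt {g : KK⟦X⟧} {n k : ℕ} (h : k < n) : coeff k (X^n * g) = 0 := by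
  rw [coeff_mul]
  refine Finset.sum_eq_zero fun p hp => ?_
  have := Finset.HasAntidiagonal.antidiagonal.fst_le hp
  rw [coeff_X_pow, if_neg (by omega), zero_mul]

lemma DH_eq : D (X * W) = W + X * D W := by
  rw [Derivation.leibniz, smul_eq_mul, smul_eq_mul, PowerSeries.derivative_X, mul_one]
  ring

/-- Lemma A: formal residue change of variables, polynomial version. -/
lemma change_of_var (hW : PowerSeries.constantCoeff W ≠ 0) (P : Polynomial KK)
    (m : ℕ) (hm : 1 ≤ m) :
    P.coeff (m-1)
      = coeff (m-1) (W⁻¹^m * Polynomial.aeval ((X : KK⟦X⟧) * W) P * (W + X * D W)) := by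
  induction P using Polynomial.induction_on' with
  | add p q hp hq =>
    have e : W⁻¹^m * Polynomial.aeval ((X : KK⟦X⟧) * W) (p + q) * (W + X * D W)
        = W⁻¹^m * Polynomial.aeval ((X : KK⟦X⟧) * W) p * (W + X * D W)
          + W⁻¹^m * Polynomial.aeval ((X : KK⟦X⟧) * W) q * (W + X * D W) := by
      rw [map_add]; ring
    rw [Polynomial.coeff_add, e, map_add, ← hp, ← hq]
  | monomial n a =>
    have hae : Polynomial.aeval ((X : KK⟦X⟧) * W) (Polynomial.monomial n a)
        = C a * ((X : KK⟦X⟧) * W)^n := by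
      rw [Polynomial.aeval_monomial]; rfl
    rcases lt_or_ge n m with hlt | hge
    · obtain ⟨j, hj, rfl⟩ : ∃ j, 1 ≤ j ∧ m = n + j := ⟨m - n, by omega, by omega⟩
      have hVW : W * W⁻¹ = 1 := PowerSeries.mul_inv_cancel W hW
      have e : W⁻¹^(n+j) * (C a * ((X : KK⟦X⟧) * W)^n) * (W + X * D W)
          = (W * W⁻¹)^n * (C a * (X^n * (W⁻¹^j * (W + X * D W)))) := by ring
      rw [hae, e, hVW, one_pow, one_mul, show n + j - 1 = (j-1) + n by omega]
      rw [coeff_C_mul, coeff_X_pow_mul]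
      match j, hj with
      | 1, _ =>
        rw [resid_one W hW, Polynomial.coeff_monomial, if_pos (by omega)]
        simp
      | (i+2), _ =>
        rw [show i + 2 - 1 = i + 1 by omega, resid_zero W hW i, mul_zero,
          Polynomial.coeff_monomial, if_neg (by omega)]
    · have e : W⁻¹^m * (C a * ((X : KK⟦X⟧) * W)^n) * (W + X * D W)
          = X^n * (C a * (W⁻¹^m * W^n * (W + X * D W))) := by ring
      rw [hae, e, coeff_X_pow_mul_lt (by omega), Polynomial.coeff_monomial,
        if_neg (by omega)]

/-- Lagrange inversion, specialized. -/
lemma lagrange_main (hW : PowerSeries.constantCoeff W ≠ 0) (P : Polynomial KK)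
    (hP : Polynomial.aeval ((X : KK⟦X⟧) * W) P = W) (k : ℕ) (hk : 1 ≤ k) :
    (P^k).coeff (k-1) = coeff k ((X : KK⟦X⟧) * W) * k := by
  have h1 := change_of_var W hW (P^k) k hk
  rw [map_pow, hP] at h1
  have hVW : W⁻¹^k * W^k = 1 := by
    rw [← mul_pow, PowerSeries.inv_mul_cancel W hW, one_pow]
  have e : W⁻¹^k * W^k * (W + X * D W) = W⁻¹^k * W^k * D ((X : KK⟦X⟧) * W) := by
    rw [DH_eq]
  rw [e, hVW, one_mul] at h1
  rw [h1, PowerSeries.coeff_derivative, show k - 1 + 1 = k by omega, Nat.cast_sub hk]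
  push_cast
  ring

end Lagrange

noncomputable def WS : KK⟦X⟧ := FK T * FK T * (FK T + C T - 1)

lemma X_mul_WS : (X : KK⟦X⟧) * WS T = FK T - 1 := by
  have h := FK_eq T
  unfold WS
  linear_combination -h

lemma constantCoeff_FK : PowerSeries.constantCoeff (FK T) = 1 := by
  rw [← coeff_zero_eq_constantCoeff, coeff_FK]
  norm_num [mc]

lemma constantCoeff_WS : PowerSeries.constantCoeff (WS T) = T := by
  unfold WS
  rw [map_mul, map_mul, map_sub, map_add, constantCoeff_FK, constantCoeff_C, map_one]
  ring

noncomputable def Pψ : Polynomial KK :=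
  (Polynomial.X + 1)^2 * (Polynomial.X + Polynomial.C T)

lemma aeval_Pψ : Polynomial.aeval ((X : KK⟦X⟧) * WS T) (Pψ T) = WS T := by
  unfold Pψ
  rw [map_mul, map_pow, map_add, map_add, Polynomial.aeval_X, Polynomial.aeval_C,
    map_one, X_mul_WS]
  rw [← PowerSeries.C_eq_algebraMap]
  unfold WS
  ring

lemma mc_eval (hT : T ≠ 0) (k : ℕ) (hk : 1 ≤ k) :
    mc T (2*k) * (k : KK) = ((Pψ T)^k).coeff (k-1) := by
  have h := lagrange_main (WS T) (by rw [constantCoeff_WS]; exact hT) (Pψ T) (aeval_Pψ T) k hk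
  rw [h, X_mul_WS, map_sub, coeff_FK, coeff_one, if_neg (by omega), sub_zero]

lemma coeff_Pψ_pow (k : ℕ) (hk : 1 ≤ k) :
    ((Pψ T)^k).coeff (k-1)
      = ∑ b ∈ Finset.Icc 1 k, (((k.choose b) * ((2*k).choose (b-1)) : ℕ) : KK) * T^b := by
  unfold Pψ
  rw [mul_pow, ← pow_mul, Polynomial.coeff_mul]
  rw [show (Polynomial.X + 1 : Polynomial KK) = Polynomial.X + Polynomial.C 1 by rw [Polynomial.C_1]]
  refine Finset.sum_nbij' (i := fun p => k - p.2) (j := fun b => (b-1, k-b)) ?_ ?_ ?_ ?_ ?_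
  · intro p hp
    have := Finset.HasAntidiagonal.mem_antidiagonal.mp hp
    simp only [Finset.mem_Icc]
    omega
  · intro b hb
    simp only [Finset.mem_Icc] at hb
    simp only [Finset.HasAntidiagonal.mem_antidiagonal]
    omega
  · intro p hp
    have := Finset.HasAntidiagonal.mem_antidiagonal.mp hp
    simp only [Prod.ext_iff]
    constructor <;> omega
  · intro b hb
    simp only [Finset.mem_Icc] at hb
    show k - (k - b) = b
    omega
  · intro p hp
    have hpp := Finset.HasAntidiagonal.mem_antidiagonal.mp hp
    rw [Polynomial.coeff_X_add_C_pow, Polynomial.coeff_X_add_C_pow,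
      show k - p.2 - 1 = p.1 by omega, Nat.choose_symm (show p.2 ≤ k by omega)]
    push_cast
    ring

lemma mc_even_formula (hT : T ≠ 0) (k : ℕ) (hk : 1 ≤ k) :
    mc T (2*k) = ∑ b ∈ Finset.Icc 1 k,
      (algebraMap ℚ KK ((1 / (b:ℚ)) * (((k-1).choose (b-1) : ℕ) : ℚ)
        * ((((2*k).choose (b-1)) : ℕ) : ℚ))) * T^b := by
  have h1 := mc_eval T hT k hk
  have hkne : (k : KK) ≠ 0 := Nat.cast_ne_zero.mpr (by omega)
  apply mul_right_cancel₀ hkne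
  rw [h1, coeff_Pψ_pow T k hk, Finset.sum_mul]
  refine Finset.sum_congr rfl fun b hb => ?_
  simp only [Finset.mem_Icc] at hb
  have hnat : k * ((k-1).choose (b-1)) = k.choose b * b := by
    have h := Nat.add_one_mul_choose_eq (k-1) (b-1)
    rwa [show k - 1 + 1 = k by omega, show b - 1 + 1 = b by omega] at h
  have hb0 : ((b:ℚ)) ≠ 0 := Nat.cast_ne_zero.mpr (by omega)
  have hQ : ((k.choose b * (2*k).choose (b-1) : ℕ) : ℚ)
      = ((1 / (b:ℚ)) * (((k-1).choose (b-1) : ℕ) : ℚ) * ((((2*k).choose (b-1)) : ℕ) : ℚ)) * k := by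
    field_simp
    have : ((k.choose b * b : ℕ) : ℚ) = ((k * ((k-1).choose (b-1)) : ℕ) : ℚ) := by
      rw [hnat]
    push_cast at this ⊢
    nlinarith [this]
  have hK := congrArg (algebraMap ℚ KK) hQ
  rw [map_mul, map_natCast, map_natCast] at hK
  rw [hK]
  ring

noncomputable abbrev phiK : Polynomial ℚ →+* KK := algebraMap (Polynomial ℚ) KK

lemma phiK_inj : Function.Injective phiK := IsFractionRing.injective (Polynomial ℚ) KK

noncomputable abbrev TT : KK := phiK Polynomial.X

lemma TT_ne : TT ≠ 0 := fun h => by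
  have := phiK_inj (h.trans (map_zero phiK).symm)
  exact Polynomial.X_ne_zero this

lemma phiK_C (q : ℚ) : phiK (Polynomial.C q) = algebraMap ℚ KK q := by
  rw [IsScalarTower.algebraMap_apply ℚ (Polynomial ℚ) KK q, Polynomial.algebraMap_eq]

lemma phiK_moment (n : ℕ) : phiK (freeBesselMoment n) = mc TT n := by
  rcases Nat.eq_zero_or_pos n with rfl | hn
  · rw [show mc TT 0 = 1 from by rw [mc], freeBesselMoment]
    simp
  rcases Nat.even_or_odd n with ⟨k, rfl⟩ | ⟨k, rfl⟩
  · have hk : 1 ≤ k := by omega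
    rw [show k + k = 2*k by ring] at *
    rw [freeBesselMoment]
    rw [if_neg (by omega), if_pos ⟨k, by ring⟩]
    rw [mc_even_formula TT TT_ne k hk]
    rw [map_sum]
    refine Finset.sum_congr (by rw [show 2*k/2 = k by omega]) fun b hb => ?_
    rw [show 2*k/2 = k by omega, map_mul, map_pow, phiK_C]
  · rw [show 2*k+1 = 2*k+1 by rfl, mc_odd TT k, freeBesselMoment]
    rw [if_neg (by omega), if_neg (by omega)]
    simp

noncomputable abbrev fP : (Polynomial ℚ)⟦X⟧ := PowerSeries.mk freeBesselMoment

lemma map_fP : PowerSeries.map phiK fP = fz TT := by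
  ext n
  rw [PowerSeries.coeff_map, coeff_mk, coeff_fz, phiK_moment]

lemma fP_eq : fP = 1 + X^2 * ((fP * fP) * fP
    + (PowerSeries.C Polynomial.X - 1) * (fP * fP)) := by
  have hinj : Function.Injective (PowerSeries.map phiK) := by
    intro a b h
    refine PowerSeries.ext fun n => ?_
    have h2 := congrArg (coeff n) h
    rw [PowerSeries.coeff_map, PowerSeries.coeff_map] at h2
    exact phiK_inj h2
  apply hinj
  simp only [map_add, map_mul, map_one, map_pow, map_sub, PowerSeries.map_X,
    PowerSeries.map_C, map_fP]
  exact fz_eq TT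

end FreeBesselAux

/-- The R-transform `R(z) = t z/(1 − z²)` corresponds, via `G(K(z)) = z`,
`K(z) = R(z) + 1/z` (equivalently, the relation `f(z) = 1 + w·R(w)` with `w = z f(z)`,
which for this `R` reads `(1 − w²)(f − 1) = t w²`), to the moment series
`f(z) = Σ_k m_k z^k` satisfying `f = 1 + (zf)²(f + t − 1)`, whose even moments are
`m_{2k} = Σ_{b=1}^k (1/b) binom(k−1,b−1) binom(2k,b−1) t^b` and whose odd moments
vanish. All identities are between formal power series in `z` over `ℚ[t]`. -/
theorem freeBessel_R_transform :
    let f : PowerSeries (Polynomial ℚ) := PowerSeries.mk freeBesselMoment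
    let T : PowerSeries (Polynomial ℚ) := PowerSeries.C Polynomial.X
    let w : PowerSeries (Polynomial ℚ) := PowerSeries.X * f
    (1 - w ^ 2) * (f - 1) = T * w ^ 2 ∧
    f = 1 + w ^ 2 * (f + T - 1) ∧
    (∀ k : ℕ, 1 ≤ k → PowerSeries.coeff (2 * k) f =
      ∑ b ∈ Finset.Icc 1 k,
        Polynomial.C ((1 / (b : ℚ)) * ((k - 1).choose (b - 1)) * ((2 * k).choose (b - 1)))
          * Polynomial.X ^ b) ∧
    (∀ k : ℕ, PowerSeries.coeff (2 * k + 1) f = 0) := by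
  intro f T w
  have heq : f = 1 + X^2 * ((f * f) * f + (T - 1) * (f * f)) := fP_eq
  refine ⟨by linear_combination heq, by linear_combination heq, ?_, ?_⟩
  · intro k hk
    have hc : PowerSeries.coeff (2*k) f = freeBesselMoment (2*k) :=
      coeff_mk _ _
    rw [hc, freeBesselMoment]
    rw [if_neg (by omega), if_pos ⟨k, rfl⟩, show 2*k/2 = k by omega]
  · intro k
    have hc : PowerSeries.coeff (2*k+1) f = freeBesselMoment (2*k+1) :=
      coeff_mk _ _
    rw [hc, freeBesselMoment]
    rw [if_neg (by omega), if_neg (by omega)]
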